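/- Let F be a graph, let (H, σ) be an F-coloured graph, and let c : V(F) → ℤ be an injection. Suppose that a real linear combination of the coefficient vectors of the cycle-equations in Eq(H, σ, c) yields an equation Σ_{e ∈ E(H)} a_e x_e = 0 that is convex, i.e., exactly one of the coefficients a_e is negative and all other coefficients a_e are nonnegative. Then H contains a cycle v_1 v_2 ⋯ v_ℓ with c(σ(v_1)) < c(σ(v_2)) < ... < c(σ(v_ℓ)); in particular, the cycle-equation of this single cycle is convex. -/

import Mathlib

open SimpleGraph


/-- The coefficient vector of the cycle-equation of a closed walk `w` in `H`, with
respect to the colouring `σ` and the injection `c`: the variable indexed by the edge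
`{v_i, v_{i+1}}` (traversed from `v_i` to `v_{i+1}`) receives the coefficient
`c(σ(v_{i+1})) − c(σ(v_i))`. -/
def cycleEqCoeff {β α : Type*} [DecidableEq β] {H : SimpleGraph β} (σ : β → α) (c : α → ℤ)
    {u v : β} (w : H.Walk u v) : Sym2 β → ℤ :=
  fun e => (w.darts.map
    (fun d => if d.edge = e then c (σ d.toProd.2) - c (σ d.toProd.1) else 0)).sum

lemma telescope_darts {β : Type*} {H : SimpleGraph β} (f : β → ℝ) {u v : β} (w : H.Walk u v) :
    (w.darts.map (fun d => f d.toProd.2 - f d.toProd.1)).sum = f v - f u := by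
  induction w with
  | nil => simp
  | cons h q ih => simp [ih]

lemma sum_list_swap {γ δ : Type*} [Fintype δ] (l : List γ) (f : γ → δ → ℝ) :
    ∑ e : δ, (l.map (fun d => f d e)).sum = (l.map (fun d => ∑ e : δ, f d e)).sum := by
  induction l with
  | nil => simp
  | cons a t ih => simp [Finset.sum_add_distrib, ih]

lemma aux_concat_isCycle {β : Type*} {H : SimpleGraph β} {y x : β} (q : H.Walk y x)
    (h : H.Adj x y) (hq : q.IsPath) (he : s(x, y) ∉ q.edges) : (q.concat h).IsCycle := by
  rw [Walk.isCycle_def]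
  refine ⟨?_, Walk.concat_ne_nil q h, ?_⟩
  · rw [Walk.isTrail_def, Walk.edges_concat, List.concat_eq_append, List.nodup_append]
    exact ⟨hq.isTrail.edges_nodup, List.nodup_singleton _, by simp only [List.mem_singleton]; rintro a ha b rfl rfl; exact he ha⟩
  · have hs := hq.support_nodup
    rw [Walk.support_eq_cons] at hs
    rw [Walk.support_concat, Walk.support_eq_cons q, List.cons_append,
      List.tail_cons, List.nodup_append]
    rw [List.nodup_cons] at hs
    refine ⟨hs.2, List.nodup_singleton _, ?_⟩
    intro a haa b hb hab
    simp only [List.mem_singleton] at hb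
    subst hb; subst hab
    exact hs.1 haa

/-- Let `(H, σ)` be an `F`-coloured graph and `c : V(F) → ℤ` an
injection.  If some real linear combination of the coefficient vectors of the
cycle-equations of `H` (with respect to `σ` and `c`) is a convex equation — i.e. has
exactly one negative coefficient `a_{e₀}` on the edges of `H`, all other edge
coefficients being nonnegative — then `H` contains a cycle whose vertices have strictly
increasing colours `c(σ(v₁)) < c(σ(v₂)) < ⋯ < c(σ(v_ℓ))`; in particular the
cycle-equation of this single cycle is convex. -/
theorem stmt_16 {α β : Type*} [Fintype α] [Fintype β] [DecidableEq β]
    (F : SimpleGraph α) (H : SimpleGraph β) (σ : β → α)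
    (hσ : ∀ x y, H.Adj x y → F.Adj (σ x) (σ y))
    (c : α → ℤ) (hc : Function.Injective c)
    (a : Sym2 β → ℝ)
    (ha : a ∈ Submodule.span ℝ
      {x : Sym2 β → ℝ | ∃ (v : β) (w : H.Walk v v), w.IsCycle ∧
        x = fun e => (cycleEqCoeff σ c w e : ℝ)})
    (e₀ : Sym2 β) (he₀ : e₀ ∈ H.edgeSet) (hneg : a e₀ < 0)
    (hpos : ∀ e ∈ H.edgeSet, e ≠ e₀ → 0 ≤ a e) :
    ∃ (v : β) (w : H.Walk v v), w.IsCycle ∧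
      List.Chain' (· < ·) (w.support.dropLast.map (fun x => c (σ x))) := by
  classical
  -- adjacent vertices get distinct colours
  have hcol : ∀ {u v : β}, H.Adj u v → c (σ u) ≠ c (σ v) := by
    intro u v huv
    exact fun h => (hσ u v huv).ne (hc h)
  -- write e₀ = s(y,x) with increasing colour
  obtain ⟨⟨y₀, x₀⟩, he⟩ := Quot.exists_rep e₀
  have hadj₀ : H.Adj y₀ x₀ := by rwa [← he, SimpleGraph.mem_edgeSet] at he₀
  obtain ⟨y, x, hadj, hlt, hee⟩ : ∃ y x, H.Adj y x ∧ c (σ y) < c (σ x) ∧ e₀ = s(y, x) := by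
    rcases lt_or_gt_of_ne (hcol hadj₀) with h | h
    · exact ⟨y₀, x₀, hadj₀, h, he.symm⟩
    · exact ⟨x₀, y₀, hadj₀.symm, h, by rw [← he]; exact Sym2.eq_swap.symm⟩
  -- reachability along increasing edges avoiding e₀
  set r : β → β → Prop := fun u v => H.Adj u v ∧ c (σ u) < c (σ v) ∧ s(u, v) ≠ e₀ with hr
  set R : β → Prop := fun v => Relation.ReflTransGen r y v with hRdef
  -- the potential
  set p0 : β → ℝ := fun v => if R v then 1 else 0 with hp0
  have hp0mem : ∀ v, p0 v = 0 ∨ p0 v = 1 := by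
    intro v; by_cases h : R v <;> simp [hp0, h]
  have hp0le : ∀ {u v : β}, H.Adj u v → c (σ u) < c (σ v) → s(u, v) ≠ e₀ → p0 u ≤ p0 v := by
    intro u v h1 h2 h3
    by_cases hu : R u
    · have hv : R v := Relation.ReflTransGen.tail hu ⟨h1, h2, h3⟩
      simp [hp0, hu, hv]
    · simp only [hp0, if_neg hu]
      by_cases hv : R v <;> simp [hv]
  set g : β → β → ℝ := fun u v => (p0 v - p0 u) / ((c (σ v) : ℝ) - (c (σ u) : ℝ)) with hg
  have gsymm : ∀ u v, g u v = g v u := by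
    intro u v
    simp only [hg]
    rw [← neg_sub (p0 v), ← neg_sub ((c (σ v) : ℝ)), neg_div_neg_eq]
  set μ : Sym2 β → ℝ := fun e => if e ∈ H.edgeSet then Sym2.lift ⟨g, gsymm⟩ e else 0 with hμ
  have hμedge : ∀ {u v : β}, H.Adj u v → μ s(u, v) = g u v := by
    intro u v huv
    simp [hμ, huv]
  -- the linear functional
  set φ : (Sym2 β → ℝ) →ₗ[ℝ] ℝ :=
    { toFun := fun z => ∑ e, μ e * z e
      map_add' := by intro z w; simp [mul_add, Finset.sum_add_distrib]
      map_smul' := by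
        intro m z
        simp only [Pi.smul_apply, smul_eq_mul, RingHom.id_apply, Finset.mul_sum]
        exact Finset.sum_congr rfl fun e _ => by ring }
    with hφ
  -- φ vanishes on every cycle-equation vector
  have hker : ∀ {u v : β} (w : H.Walk u v),
      ∑ e, μ e * ((cycleEqCoeff σ c w e : ℤ) : ℝ) = p0 v - p0 u := by
    intro u v w
    have : ∀ e, ((cycleEqCoeff σ c w e : ℤ) : ℝ)
        = (w.darts.map (fun d =>
            if d.edge = e then ((c (σ d.toProd.2) : ℝ) - (c (σ d.toProd.1) : ℝ)) else 0)).sum := by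
      intro e
      rw [cycleEqCoeff, Int.cast_list_sum, List.map_map]
      refine congrArg List.sum (List.map_congr_left fun d _ => ?_)
      simp only [Function.comp_apply, apply_ite (Int.cast : ℤ → ℝ), Int.cast_sub, Int.cast_zero]
    calc ∑ e, μ e * ((cycleEqCoeff σ c w e : ℤ) : ℝ)
        = ∑ e, (w.darts.map (fun d => μ e *
            (if d.edge = e then ((c (σ d.toProd.2) : ℝ) - (c (σ d.toProd.1) : ℝ)) else 0))).sum := by
          refine Finset.sum_congr rfl fun e _ => ?_
          rw [this e, ← List.sum_map_mul_left]
      _ = (w.darts.map (fun d => ∑ e, μ e *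
            (if d.edge = e then ((c (σ d.toProd.2) : ℝ) - (c (σ d.toProd.1) : ℝ)) else 0))).sum :=
          sum_list_swap _ _
      _ = (w.darts.map (fun d => p0 d.toProd.2 - p0 d.toProd.1)).sum := by
          refine congrArg List.sum (List.map_congr_left fun d _ => ?_)
          rw [Finset.sum_eq_single d.edge]
          · have hde : d.edge = s(d.toProd.1, d.toProd.2) := by
              cases d; rfl
            have hadjd := d.adj
            have hne : ((c (σ d.toProd.2) : ℝ) - (c (σ d.toProd.1) : ℝ)) ≠ 0 := by
              rw [sub_ne_zero]
              exact_mod_cast (hcol hadjd).symm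
            rw [if_pos rfl, hde, hμedge hadjd, hg]
            exact div_mul_cancel₀ _ hne
          · intro e _ hne
            rw [if_neg (Ne.symm hne), mul_zero]
          · intro h; exact absurd (Finset.mem_univ _) h
      _ = p0 v - p0 u := telescope_darts p0 w
  have hφa : φ a = 0 := by
    have hsub : {x : Sym2 β → ℝ | ∃ (v : β) (w : H.Walk v v), w.IsCycle ∧
        x = fun e => (cycleEqCoeff σ c w e : ℝ)} ⊆ (LinearMap.ker φ : Set (Sym2 β → ℝ)) := by
      rintro z ⟨v, w, _, rfl⟩
      simp only [SetLike.mem_coe, LinearMap.mem_ker]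
      show ∑ e, μ e * _ = 0
      rw [hker w, sub_self]
    have := Submodule.span_le.mpr hsub ha
    simpa using this
  -- x is reachable from y
  have hRx : R x := by
    by_contra hRx
    have hRy : R y := Relation.ReflTransGen.refl
    have h1 : 0 < μ e₀ * a e₀ := by
      have : μ e₀ = g y x := by rw [hee]; exact hμedge hadj
      have hgyx : g y x < 0 := by
        rw [hg]
        apply div_neg_of_neg_of_pos
        · simp [hp0, hRx, hRy]
        · rw [sub_pos]; exact_mod_cast hlt
      rw [this]
      exact mul_pos_of_neg_of_neg hgyx hneg
    have h2 : ∀ e ∈ Finset.univ.erase e₀, 0 ≤ μ e * a e := by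
      intro e hemem
      have hene : e ≠ e₀ := (Finset.mem_erase.mp hemem).1
      by_cases hE : e ∈ H.edgeSet
      · have key : 0 ≤ μ e := by
          induction e using Sym2.ind with
          | _ u v =>
            have huv : H.Adj u v := hE
            have hgkey : ∀ u v : β, H.Adj u v → c (σ u) < c (σ v) → s(u, v) ≠ e₀ → 0 ≤ g u v := by
              intro u v h1' h2' h3'
              rw [hg]
              apply div_nonneg
              · rw [sub_nonneg]; exact hp0le h1' h2' h3'
              · rw [sub_nonneg]; exact_mod_cast h2'.le
            rw [hμedge huv]
            rcases lt_or_gt_of_ne (hcol huv) with h | h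
            · exact hgkey u v huv h hene
            · rw [gsymm]
              exact hgkey v u huv.symm h (by rwa [Sym2.eq_swap])
        exact mul_nonneg key (hpos e hE hene)
      · simp [hμ, hE]
    have hsum : φ a = μ e₀ * a e₀ + ∑ e ∈ Finset.univ.erase e₀, μ e * a e := by
      show ∑ e, μ e * a e = _
      rw [← Finset.add_sum_erase _ _ (Finset.mem_univ e₀)]
    have : 0 < φ a := by
      rw [hsum]
      have := Finset.sum_nonneg h2
      linarith
    rw [hφa] at this
    exact lt_irrefl _ this
  -- build the increasing path from the reachability certificate
  have hwalk : ∃ (q : H.Walk y x),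
      List.Chain' (· < ·) (q.support.map (fun z => c (σ z))) ∧ e₀ ∉ q.edges := by
    clear hee hφa hadj hlt hneg
    induction hRx with
    | refl => exact ⟨Walk.nil, List.isChain_singleton _, by simp⟩
    | @tail b d hyb hbc ih =>
      obtain ⟨q, hq1, hq2⟩ := ih
      refine ⟨q.concat hbc.1, ?_, ?_⟩
      · rw [Walk.support_concat, List.map_append]; unfold List.Chain'; rw [List.isChain_append]
        refine ⟨hq1, List.isChain_singleton _, ?_⟩
        intro p hp z hz
        simp only [List.map_cons, List.map_nil, List.head?_cons, Option.mem_def,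
          Option.some.injEq] at hz
        rw [List.getLast?_map] at hp
        have hlast : q.support.getLast? = some b := by
          rw [List.getLast?_eq_getLast q.support_ne_nil]
          simp
        rw [hlast] at hp
        simp only [Option.map_some, Option.mem_def, Option.some.injEq] at hp
        rw [← hp, ← hz]
        exact hbc.2.1
      · rw [Walk.edges_concat, List.concat_eq_append, List.mem_append]
        rintro (h | h)
        · exact hq2 h
        · simp only [List.mem_singleton] at h
          exact hbc.2.2 h.symm
  obtain ⟨q, hchain, hedges⟩ := hwalk
  have hnodup : q.support.Nodup := by
    have hpw : List.Pairwise (· < ·) (q.support.map (fun z => c (σ z))) :=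
      List.isChain_iff_pairwise.mp hchain
    have : (q.support.map (fun z => c (σ z))).Nodup := hpw.imp ne_of_lt
    exact this.of_map _
  have hpath : q.IsPath := Walk.IsPath.mk' hnodup
  refine ⟨y, q.concat hadj.symm, aux_concat_isCycle q hadj.symm hpath ?_, ?_⟩
  · rwa [Sym2.eq_swap, ← hee]
  · rw [Walk.support_concat, List.dropLast_concat]
    exact hchain
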